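/- For every sufficiently large n ∈ ℕ there exist a finite instance space Z, a probability distribution D on Z, a function f : ℝ × Z → ℝ, and a map g : ℝ × Z → ℝ with the following properties: (i) the population loss F(w) = E_{z∼D}[f(w;z)] equals n^{−3/8}·max{−w, −1}, so F is convex, 1-Lipschitz, and is minimized exactly on [1, ∞) with minimum value −n^{−3/8}; (ii) for every w, E_{z∼D}[g(w;z)] is a subgradient G(w) of F at w and E_{z∼D}[|g(w;z) − G(w)|²] ≤ 1; and (iii) for every step size 0 < η < 1/(64 n^{5/4}) and every T ≥ 1, gradient descent on the empirical loss using g, started from w₁ = 0 on an i.i.d. sample S ∼ D^n, satisfies E_S[F(ŵ_T^{GD})] − min_{w∈ℝ} F(w) ≥ (1 − 2n^{−1/4})/(4 n^{3/8}). -/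

import Mathlib

open scoped RealInnerProductSpace

/-- Gradient-descent iterates on the empirical loss: `w_{t+1} = w_t − (η/n)∑ᵢ g(w_t; Sᵢ)`. -/
noncomputable def gdIterate {E : Type*} [NormedAddCommGroup E] [NormedSpace ℝ E]
    {Z : Type*} [Fintype Z] {n : ℕ}
    (g : E → Z → E) (η : ℝ) (w₁ : E) (S : Fin n → Z) : ℕ → E
  | 0 => w₁
  | t + 1 => gdIterate g η w₁ S t - (η / n) • ∑ i, g (gdIterate g η w₁ S t) (S i)

open scoped Classical

noncomputable def c9 (n : ℕ) : ℝ := (n:ℝ) ^ (-(3:ℝ)/8)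
noncomputable def q9 (n : ℕ) : ℝ := (n:ℝ) ^ (-(5:ℝ)/4) / 8
def J9 (n : ℕ) : ℕ := 3 * n / 4
noncomputable def M9 (n : ℕ) : ℝ := 2 * (n:ℝ) * c9 n
noncomputable def D09 (n : ℕ) : ℝ := 1 - (J9 n : ℝ) * q9 n
noncomputable def d9 (n : ℕ) : ℝ := M9 n * q9 n / D09 n
noncomputable def D9 (n : ℕ) : Fin (J9 n + 1) → ℝ := fun z => if z = 0 then D09 n else q9 n
noncomputable def g9 (n : ℕ) : ℝ → Fin (J9 n + 1) → ℝ := fun w z =>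
  if 1 ≤ w then 0
  else if w < 0 ∨ ((J9 n : ℝ))/(n:ℝ) ≤ w then -c9 n
  else if z = 0 then -c9 n - d9 n
  else if (z:ℕ) = ⌊(n:ℝ)*w⌋₊ + 1 then -c9 n + M9 n else -c9 n

section facts
variable {n : ℕ} (hn : 64 ≤ n)
include hn

lemma x9_pos : (0:ℝ) < n := by exact_mod_cast (by omega : 0 < n)

lemma x9_one_le : (1:ℝ) ≤ n := by exact_mod_cast (by omega : 1 ≤ n)

lemma c9_pos : 0 < c9 n := Real.rpow_pos_of_pos (x9_pos hn) _

lemma c9_le_one : c9 n ≤ 1 := by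
  have := Real.rpow_le_one_of_one_le_of_nonpos (x9_one_le hn) (by norm_num : -(3:ℝ)/8 ≤ 0)
  simpa [c9] using this

lemma q9_pos : 0 < q9 n := by
  have := Real.rpow_pos_of_pos (x9_pos hn) (-(5:ℝ)/4)
  unfold q9; positivity

lemma J9_cast_le : (J9 n : ℝ) ≤ (n:ℝ) := by
  have : J9 n ≤ n := by unfold J9; omega
  exact_mod_cast this

lemma Jq9_le : (J9 n : ℝ) * q9 n ≤ 1/8 := by
  have h1 : (J9 n : ℝ) * q9 n ≤ (n:ℝ) * q9 n :=
    mul_le_mul_of_nonneg_right (J9_cast_le hn) (q9_pos hn).le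
  have h2 : (n:ℝ) * ((n:ℝ) ^ (-(5:ℝ)/4)) = (n:ℝ) ^ (-(1:ℝ)/4) := by
    rw [mul_comm, ← Real.rpow_add_one (x9_pos hn).ne']
    norm_num
  have h3 : (n:ℝ) ^ (-(1:ℝ)/4) ≤ 1 :=
    Real.rpow_le_one_of_one_le_of_nonpos (x9_one_le hn) (by norm_num)
  unfold q9 at h1 ⊢
  calc (J9 n : ℝ) * q9 n ≤ (n:ℝ) * ((n:ℝ) ^ (-(5:ℝ)/4) / 8) := h1
    _ = (n:ℝ) ^ (-(1:ℝ)/4) / 8 := by rw [← h2]; ring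
    _ ≤ 1/8 := by linarith

lemma D09_ge : 7/8 ≤ D09 n := by
  have := Jq9_le hn; unfold D09; linarith

lemma D09_le_one : D09 n ≤ 1 := by
  have h1 : 0 ≤ (J9 n : ℝ) * q9 n := mul_nonneg (Nat.cast_nonneg _) (q9_pos hn).le
  unfold D09; linarith

lemma D09_pos : 0 < D09 n := lt_of_lt_of_le (by norm_num) (D09_ge hn)

lemma M9_eq : M9 n = 2 * (n:ℝ) ^ ((5:ℝ)/8) := by
  unfold M9 c9
  rw [mul_assoc, mul_comm (n:ℝ), ← Real.rpow_add_one (x9_pos hn).ne']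
  norm_num

lemma M9_pos : 0 < M9 n := by
  rw [M9_eq hn]; positivity

lemma Mq9_eq : M9 n * q9 n = (n:ℝ) ^ (-(5:ℝ)/8) / 4 := by
  rw [M9_eq hn]
  unfold q9
  rw [show 2 * (n:ℝ) ^ ((5:ℝ)/8) * ((n:ℝ) ^ (-(5:ℝ)/4) / 8)
      = ((n:ℝ) ^ ((5:ℝ)/8) * (n:ℝ) ^ (-(5:ℝ)/4)) / 4 by ring,
    ← Real.rpow_add (x9_pos hn)]
  norm_num

lemma d9_nonneg : 0 ≤ d9 n := by
  unfold d9
  have := (M9_pos hn).le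
  have := (q9_pos hn).le
  have := (D09_pos hn).le
  positivity

lemma d9_le : d9 n ≤ c9 n / 2 := by
  have h1 : d9 n ≤ M9 n * q9 n * (8/7) := by
    unfold d9
    rw [div_le_iff₀ (D09_pos hn)]
    have h2 := D09_ge hn
    have h3 : 0 ≤ M9 n * q9 n := mul_nonneg (M9_pos hn).le (q9_pos hn).le
    nlinarith
  have h4 : (n:ℝ) ^ (-(5:ℝ)/8) ≤ (n:ℝ) ^ (-(3:ℝ)/8) :=
    Real.rpow_le_rpow_of_exponent_le (x9_one_le hn) (by norm_num)
  rw [Mq9_eq hn] at h1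
  have h5 : (0:ℝ) ≤ (n:ℝ) ^ (-(3:ℝ)/8) := (Real.rpow_pos_of_pos (x9_pos hn) _).le
  unfold c9
  linarith

lemma qM29_eq : q9 n * M9 n ^ 2 = 1/2 := by
  rw [M9_eq hn]
  unfold q9
  rw [mul_pow, ← Real.rpow_natCast ((n:ℝ) ^ ((5:ℝ)/8)) 2, ← Real.rpow_mul (x9_pos hn).le]
  rw [show (n:ℝ) ^ (-(5:ℝ)/4) / 8 * (2 ^ 2 * (n:ℝ) ^ ((5:ℝ)/8 * (2:ℕ)))
      = ((n:ℝ) ^ (-(5:ℝ)/4) * (n:ℝ) ^ ((5:ℝ)/8 * (2:ℕ))) / 2 by push_cast; ring,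
    ← Real.rpow_add (x9_pos hn)]
  norm_num

lemma sumD9 : ∑ z, D9 n z = 1 := by
  rw [Fin.sum_univ_succ]
  have h1 : ∀ i : Fin (J9 n), D9 n i.succ = q9 n := fun i => by
    simp [D9, Fin.succ_ne_zero i]
  rw [Finset.sum_congr rfl (fun i _ => h1 i), Finset.sum_const, Finset.card_univ,
    Fintype.card_fin, nsmul_eq_mul]
  have h0 : D9 n 0 = D09 n := by simp [D9]
  rw [h0]; unfold D09; ring

lemma D9_nonneg : ∀ z, 0 ≤ D9 n z := by
  intro z
  unfold D9
  split
  · exact (D09_pos hn).le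
  · exact (q9_pos hn).le

end facts

section struct
variable {n : ℕ} (hn : 64 ≤ n)
include hn

lemma sum_D_split (zj : Fin (J9 n + 1)) (hzj : zj ≠ 0) (A B : ℝ) :
    ∑ z, D9 n z * (if z = 0 then A else if z = zj then B else 0)
      = D09 n * A + q9 n * B := by
  have key : ∀ z : Fin (J9 n + 1), D9 n z * (if z = 0 then A else if z = zj then B else 0)
      = (if z = 0 then D09 n * A else 0) + (if z = zj then q9 n * B else 0) := by
    intro z
    by_cases hz0 : z = 0
    · subst hz0
      rw [if_pos rfl, if_pos rfl, if_neg (Ne.symm hzj)]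
      simp [D9]
    · rw [if_neg hz0, if_neg hz0]
      by_cases hzj' : z = zj
      · subst hzj'
        rw [if_pos rfl, if_pos rfl]
        simp [D9, hz0]
      · rw [if_neg hzj', if_neg hzj']
        simp
  rw [Finset.sum_congr rfl (fun z _ => key z), Finset.sum_add_distrib]
  simp

lemma g9_formB (w : ℝ) (h1 : ¬ 1 ≤ w) (h2 : ¬(w < 0 ∨ ((J9 n : ℝ))/(n:ℝ) ≤ w)) :
    ∃ zj : Fin (J9 n + 1), zj ≠ 0 ∧
      ∀ z, g9 n w z = -c9 n + (if z = 0 then -(d9 n) else if z = zj then M9 n else 0) := by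
  push_neg at h2
  obtain ⟨hw0, hwJ⟩ := h2
  have hxw : (n:ℝ) * w < J9 n := by
    rw [lt_div_iff₀ (x9_pos hn)] at hwJ
    linarith
  have hfl : ⌊(n:ℝ)*w⌋₊ < J9 n := by
    rw [Nat.floor_lt (by positivity)]
    exact_mod_cast hxw
  refine ⟨⟨⌊(n:ℝ)*w⌋₊ + 1, by omega⟩, ?_, ?_⟩
  · intro h
    have := congrArg Fin.val h
    simp at this
  · intro z
    unfold g9
    rw [if_neg h1, if_neg (by push_neg; exact ⟨hw0, hwJ⟩)]
    by_cases hz0 : z = 0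
    · rw [if_pos hz0, if_pos hz0]; ring
    · rw [if_neg hz0, if_neg hz0]
      by_cases hzj : (z : ℕ) = ⌊(n:ℝ)*w⌋₊ + 1
      · rw [if_pos hzj, if_pos (by apply Fin.ext; exact hzj)]
      · rw [if_neg hzj, if_neg (by intro h; exact hzj (congrArg Fin.val h))]
        ring

lemma G9_eq (w : ℝ) : (∑ z, D9 n z * g9 n w z) = if 1 ≤ w then 0 else -c9 n := by
  by_cases h1 : 1 ≤ w
  · rw [if_pos h1]
    have hg : ∀ z : Fin (J9 n + 1), g9 n w z = 0 := fun z => by unfold g9; rw [if_pos h1]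
    simp [hg]
  · rw [if_neg h1]
    by_cases h2 : w < 0 ∨ ((J9 n : ℝ))/(n:ℝ) ≤ w
    · have hg : ∀ z : Fin (J9 n + 1), g9 n w z = -c9 n := fun z => by
        unfold g9; rw [if_neg h1, if_pos h2]
      rw [Finset.sum_congr rfl (fun z _ => by rw [hg z]), ← Finset.sum_mul, sumD9 hn, one_mul]
    · obtain ⟨zj, hzj, hform⟩ := g9_formB hn w h1 h2
      have : ∑ z, D9 n z * g9 n w z
          = ∑ z, (D9 n z * (-c9 n) + D9 n z * (if z = 0 then -(d9 n) else if z = zj then M9 n else 0)) := by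
        refine Finset.sum_congr rfl fun z _ => ?_
        rw [hform z]; ring
      rw [this, Finset.sum_add_distrib, ← Finset.sum_mul, sumD9 hn, one_mul,
        sum_D_split hn zj hzj]
      have hd : D09 n * d9 n = M9 n * q9 n := by
        unfold d9
        rw [mul_div_assoc']
        exact mul_div_cancel_left₀ _ (D09_pos hn).ne'
      linarith [hd]

lemma var9_le (w : ℝ) : (∑ z, D9 n z * |g9 n w z - ∑ z', D9 n z' * g9 n w z'| ^ 2) ≤ 1 := by
  rw [G9_eq hn]
  by_cases h1 : 1 ≤ w
  · rw [if_pos h1]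
    have hg : ∀ z : Fin (J9 n + 1), g9 n w z = 0 := fun z => by unfold g9; rw [if_pos h1]
    simp [hg]
  · rw [if_neg h1]
    by_cases h2 : w < 0 ∨ ((J9 n : ℝ))/(n:ℝ) ≤ w
    · have hg : ∀ z : Fin (J9 n + 1), g9 n w z = -c9 n := fun z => by
        unfold g9; rw [if_neg h1, if_pos h2]
      simp [hg]
    · obtain ⟨zj, hzj, hform⟩ := g9_formB hn w h1 h2
      have key : ∀ z : Fin (J9 n + 1), D9 n z * |g9 n w z - (-c9 n)| ^ 2
          = D9 n z * (if z = 0 then (d9 n)^2 else if z = zj then (M9 n)^2 else 0) := by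
        intro z
        rw [hform z]
        congr 1
        by_cases hz0 : z = 0
        · rw [if_pos hz0, if_pos hz0]
          rw [show -c9 n + -(d9 n) - (-c9 n) = -(d9 n) by ring, abs_neg, sq_abs]
        · rw [if_neg hz0, if_neg hz0]
          by_cases hzj' : z = zj
          · rw [if_pos hzj', if_pos hzj']
            rw [show -c9 n + M9 n - (-c9 n) = M9 n by ring, sq_abs]
          · rw [if_neg hzj', if_neg hzj']
            simp
      rw [Finset.sum_congr rfl (fun z _ => key z), sum_D_split hn zj hzj]
      have h3 : q9 n * M9 n ^ 2 = 1/2 := qM29_eq hn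
      have h4 : d9 n ≤ c9 n / 2 := d9_le hn
      have h5 : c9 n ≤ 1 := c9_le_one hn
      have h6 : 0 ≤ d9 n := d9_nonneg hn
      have h7 : D09 n ≤ 1 := D09_le_one hn
      have h8 : 0 < D09 n := D09_pos hn
      nlinarith

lemma g9_lb (w : ℝ) (z : Fin (J9 n + 1)) : -(c9 n + d9 n) ≤ g9 n w z := by
  have hc := (c9_pos hn).le
  have hd := d9_nonneg hn
  have hM := (M9_pos hn).le
  unfold g9
  split_ifs <;> linarith

end struct

section traps
variable {n : ℕ} (hn : 64 ≤ n)
include hn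

lemma step9 (η : ℝ) (hη0 : 0 < η) (hη : η < 1/(64*(n:ℝ)^((5:ℝ)/4))) :
    η * (c9 n + d9 n) ≤ 1/(n:ℝ) := by
  have hx := x9_pos hn
  have h1 : c9 n + d9 n ≤ 2 * c9 n := by
    have := d9_le hn; have := (c9_pos hn).le; linarith
  have h2 : (0:ℝ) < 64 * (n:ℝ)^((5:ℝ)/4) := by positivity
  have h3 : η * (c9 n + d9 n) ≤ (1/(64*(n:ℝ)^((5:ℝ)/4))) * (2 * c9 n) := by
    apply mul_le_mul hη.le h1
    · have := d9_nonneg hn; have := (c9_pos hn).le; linarith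
    · positivity
  have h5 : (n:ℝ)^(-(3:ℝ)/8) * (n:ℝ) = (n:ℝ)^((5:ℝ)/8) := by
    rw [← Real.rpow_add_one hx.ne']; norm_num
  have h6 : (n:ℝ)^((5:ℝ)/8) ≤ (n:ℝ)^((5:ℝ)/4) :=
    Real.rpow_le_rpow_of_exponent_le (x9_one_le hn) (by norm_num)
  have h4 : (1/(64*(n:ℝ)^((5:ℝ)/4))) * (2 * c9 n) ≤ 1/(n:ℝ) := by
    rw [div_mul_eq_mul_div, one_mul, div_le_div_iff₀ h2 hx]
    unfold c9
    nlinarith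
  linarith

lemma J9_div_le : ((J9 n : ℝ))/(n:ℝ) ≤ 3/4 := by
  have hx := x9_pos hn
  rw [div_le_iff₀ hx]
  have h : 4 * J9 n ≤ 3 * n := by unfold J9; omega
  have h2 : (4:ℝ) * (J9 n : ℝ) ≤ 3 * (n:ℝ) := by exact_mod_cast h
  linarith

lemma trap9 (η : ℝ) (hη0 : 0 ≤ η) (hstep : η * (c9 n + d9 n) ≤ 1/(n:ℝ))
    (S : Fin n → Fin (J9 n + 1)) (k : ℕ) (hk : k + 1 ≤ J9 n) (i₀ : Fin n)
    (hi₀ : ((S i₀ : Fin (J9 n + 1)) : ℕ) = k + 1) :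
    ∀ t, gdIterate (g9 n) η 0 S t < ((k:ℝ)+1)/(n:ℝ) := by
  have hx := x9_pos hn
  have hkJ : ((k:ℝ)+1)/(n:ℝ) ≤ ((J9 n : ℝ))/(n:ℝ) := by
    have h : ((k:ℝ)+1) ≤ ((J9 n : ℝ)) := by exact_mod_cast hk
    gcongr
  intro t
  induction t with
  | zero =>
    show (0:ℝ) < ((k:ℝ)+1)/(n:ℝ)
    positivity
  | succ t IH =>
    show gdIterate (g9 n) η 0 S t - (η/(n:ℝ)) • ∑ i, g9 n (gdIterate (g9 n) η 0 S t) (S i)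
        < ((k:ℝ)+1)/(n:ℝ)
    set w := gdIterate (g9 n) η 0 S t with hwdef
    rw [smul_eq_mul]
    by_cases hcase : w < (k:ℝ)/(n:ℝ)
    · -- below the trap interval: bounded upward step
      have hlb : ∀ i ∈ Finset.univ, -(c9 n + d9 n) ≤ g9 n w (S i) :=
        fun i _ => g9_lb hn w (S i)
      have hsum := Finset.card_nsmul_le_sum Finset.univ _ _ hlb
      rw [Finset.card_univ, Fintype.card_fin, nsmul_eq_mul] at hsum
      have h1 : - ∑ i, g9 n w (S i) ≤ (n:ℝ) * (c9 n + d9 n) := by linarith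
      have h2 : (0:ℝ) ≤ η / n := by positivity
      have h3 : - ((η/n) * ∑ i, g9 n w (S i)) ≤ (η/n) * ((n:ℝ)*(c9 n + d9 n)) := by
        have := mul_le_mul_of_nonneg_left h1 h2
        linarith [this]
      have h4 : (η/n) * ((n:ℝ)*(c9 n + d9 n)) = η * (c9 n + d9 n) := by
        field_simp
      have h6 : ((k:ℝ)+1)/(n:ℝ) = (k:ℝ)/n + 1/n := by ring
      rw [h6]
      have := hstep
      linarith
    · push_neg at hcase
      -- inside the trap interval: gradient sum is nonnegative
      have hw1 : ¬ (1:ℝ) ≤ w := by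
        have h34 := J9_div_le hn
        intro h; linarith [IH]
      have hw2 : ¬ (w < 0 ∨ ((J9 n : ℝ))/(n:ℝ) ≤ w) := by
        push_neg
        constructor
        · have : (0:ℝ) ≤ (k:ℝ)/n := by positivity
          linarith
        · calc w < ((k:ℝ)+1)/(n:ℝ) := IH
            _ ≤ _ := hkJ
      have hfl : ⌊(n:ℝ)*w⌋₊ = k := by
        have hw0 : 0 ≤ w := by
          have : (0:ℝ) ≤ (k:ℝ)/n := by positivity
          linarith
        rw [Nat.floor_eq_iff (by positivity)]
        constructor
        · rw [div_le_iff₀ hx] at hcase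
          linarith
        · have hIH := IH
          rw [lt_div_iff₀ hx] at hIH
          push_cast
          linarith
      have hform : ∀ z : Fin (J9 n + 1), g9 n w z =
          if z = 0 then -c9 n - d9 n else if (z:ℕ) = k + 1 then -c9 n + M9 n else -c9 n := by
        intro z
        unfold g9
        rw [if_neg hw1, if_neg hw2, hfl]
      have hSne : S i₀ ≠ 0 := by
        intro h
        rw [h] at hi₀
        simp at hi₀
      have hterm : g9 n w (S i₀) = -c9 n + M9 n := by
        rw [hform (S i₀), if_neg hSne, if_pos hi₀]
      have hsplit : g9 n w (S i₀) + ∑ i ∈ Finset.univ.erase i₀, g9 n w (S i)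
          = ∑ i, g9 n w (S i) :=
        Finset.add_sum_erase Finset.univ (fun i => g9 n w (S i)) (Finset.mem_univ i₀)
      have herase : ((Finset.univ.erase i₀).card : ℝ) * (-(c9 n + d9 n))
          ≤ ∑ i ∈ Finset.univ.erase i₀, g9 n w (S i) := by
        have := Finset.card_nsmul_le_sum (Finset.univ.erase i₀) (fun i => g9 n w (S i))
          (-(c9 n + d9 n)) (fun i _ => g9_lb hn w (S i))
        rwa [nsmul_eq_mul] at this
      have hcard : ((Finset.univ.erase i₀).card : ℝ) = (n:ℝ) - 1 := by
        rw [Finset.card_erase_of_mem (Finset.mem_univ i₀), Finset.card_univ, Fintype.card_fin]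
        have : 1 ≤ n := by omega
        push_cast [Nat.cast_sub this]
        ring
      rw [hcard] at herase
      have hge : 0 ≤ ∑ i, g9 n w (S i) := by
        have hM : M9 n = 2*(n:ℝ)*c9 n := rfl
        have hd := d9_le hn
        have hc := (c9_pos hn).le
        have hd0 := d9_nonneg hn
        have hn2 : (2:ℝ) ≤ (n:ℝ) := by exact_mod_cast (by omega : 2 ≤ n)
        have hnd : (n:ℝ) * d9 n ≤ (n:ℝ) * (c9 n / 2) :=
          mul_le_mul_of_nonneg_left hd (by positivity)
        nlinarith
      have h7 : 0 ≤ (η/n) * ∑ i, g9 n w (S i) := by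
        apply mul_nonneg (by positivity) hge
      linarith [IH]

end traps

lemma bern9 (a : ℝ) (m : ℕ) (h0 : 0 ≤ a) (h1 : a ≤ 1) : (1-a)^m * (1 + m*a) ≤ 1 := by
  have h2 : 1 + (m:ℝ)*a ≤ (1+a)^m := by
    have := one_add_mul_le_pow (show (-2:ℝ) ≤ a by linarith) m
    linarith
  have h3 : (0:ℝ) ≤ 1 - a := by linarith
  calc (1-a)^m * (1 + m*a) ≤ (1-a)^m * (1+a)^m := by
        apply mul_le_mul_of_nonneg_left h2 (pow_nonneg h3 m)
    _ = ((1-a)*(1+a))^m := by rw [mul_pow]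
    _ = (1 - a^2)^m := by ring_nf
    _ ≤ 1 := by
        apply pow_le_one₀ (by nlinarith) (by nlinarith)

section prob
variable {n : ℕ} (hn : 64 ≤ n)
include hn

lemma P09_le : D09 n ^ n ≤ 2 * (n:ℝ)^(-(1:ℝ)/4) := by
  have hx := x9_pos hn
  have hx64 : (64:ℝ) ≤ (n:ℝ) := by exact_mod_cast hn
  set a : ℝ := (J9 n : ℝ) * q9 n with ha
  have h0 : 0 ≤ a := mul_nonneg (Nat.cast_nonneg _) (q9_pos hn).le
  have h1 : a ≤ 1 := le_trans (Jq9_le hn) (by norm_num)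
  have hb := bern9 a n h0 h1
  have hJhalf : (n:ℝ)/2 ≤ (J9 n : ℝ) := by
    have h : 2 * n ≤ 4 * J9 n := by unfold J9; omega
    have h2 : (2:ℝ) * (n:ℝ) ≤ 4 * (J9 n : ℝ) := by exact_mod_cast h
    linarith
  have hq : q9 n = (n:ℝ) ^ (-(5:ℝ)/4) / 8 := rfl
  have hxx : (n:ℝ) * ((n:ℝ) * (n:ℝ)^(-(5:ℝ)/4)) = (n:ℝ)^((3:ℝ)/4) := by
    rw [mul_comm (n:ℝ) ((n:ℝ)^(-(5:ℝ)/4)), ← Real.rpow_add_one hx.ne',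
      mul_comm, ← Real.rpow_add_one hx.ne']
    norm_num
  have hna : (n:ℝ)^((3:ℝ)/4)/16 ≤ (n:ℝ) * a := by
    have hq5 : (0:ℝ) ≤ (n:ℝ)^(-(5:ℝ)/4) := (Real.rpow_pos_of_pos hx _).le
    have : (n:ℝ) * ((n:ℝ)/2 * ((n:ℝ)^(-(5:ℝ)/4)/8)) ≤ (n:ℝ) * a := by
      apply mul_le_mul_of_nonneg_left ?_ hx.le
      rw [ha, hq]
      apply mul_le_mul_of_nonneg_right hJhalf (by positivity)
    calc (n:ℝ)^((3:ℝ)/4)/16 = (n:ℝ) * ((n:ℝ)/2 * ((n:ℝ)^(-(5:ℝ)/4)/8)) := by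
          rw [← hxx]; ring
      _ ≤ (n:ℝ) * a := this
  have hpos : (0:ℝ) < 1 + (n:ℝ)*a := by positivity
  have h2 : D09 n ^ n ≤ 1/(1 + (n:ℝ)*a) := by
    rw [le_div_iff₀ hpos]
    exact hb
  have h34pos : (0:ℝ) < (n:ℝ)^((3:ℝ)/4) := Real.rpow_pos_of_pos hx _
  have h3 : 1/(1 + (n:ℝ)*a) ≤ 1/((n:ℝ)^((3:ℝ)/4)/16) := by
    apply one_div_le_one_div_of_le (by positivity)
    linarith
  have h4 : 1/((n:ℝ)^((3:ℝ)/4)/16) = 16/(n:ℝ)^((3:ℝ)/4) := by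
    field_simp
  have hsqrt : (8:ℝ) ≤ (n:ℝ)^((1:ℝ)/2) := by
    have h8 : ((64:ℝ))^((1:ℝ)/2) = 8 := by
      rw [show (64:ℝ) = (8:ℝ)^(2:ℕ) by norm_num, ← Real.rpow_natCast (8:ℝ) 2,
        ← Real.rpow_mul (by norm_num : (0:ℝ) ≤ 8)]
      norm_num
    calc (8:ℝ) = (64:ℝ)^((1:ℝ)/2) := h8.symm
      _ ≤ (n:ℝ)^((1:ℝ)/2) := Real.rpow_le_rpow (by norm_num) hx64 (by norm_num)
  have h5 : 16/(n:ℝ)^((3:ℝ)/4) ≤ 2 * (n:ℝ)^(-(1:ℝ)/4) := by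
    rw [div_le_iff₀ h34pos]
    have : 2 * (n:ℝ)^(-(1:ℝ)/4) * (n:ℝ)^((3:ℝ)/4) = 2 * (n:ℝ)^((1:ℝ)/2) := by
      rw [mul_assoc, ← Real.rpow_add hx]
      norm_num
    rw [this]
    linarith
  linarith

end prob

theorem statement9 :
    ∃ N : ℕ, ∀ n : ℕ, N ≤ n →
      -- a finite instance space `Z` (encoded as `Fin p`), a distribution `D` on it
      -- (given by its probability mass function), a loss `f` and a gradient oracle `g`
      ∃ (p : ℕ) (D : Fin p → ℝ) (f : ℝ → Fin p → ℝ) (g : ℝ → Fin p → ℝ),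
        (∀ z, 0 ≤ D z) ∧ (∑ z, D z) = 1 ∧
        -- (i) the population loss equals `n^{−3/8}·max{−w, −1}`; hence it is convex,
        -- 1-Lipschitz, and minimized exactly on `[1, ∞)` with minimum value `−n^{−3/8}`
        (∀ w : ℝ, (∑ z, D z * f w z) = (n : ℝ) ^ (-(3 : ℝ)/8) * max (-w) (-1)) ∧
        ConvexOn ℝ Set.univ (fun w : ℝ => ∑ z, D z * f w z) ∧
        (∀ u v : ℝ, |(∑ z, D z * f u z) - (∑ z, D z * f v z)| ≤ |u - v|) ∧
        (∀ w : ℝ, (∑ z, D z * f w z) = -(n : ℝ) ^ (-(3 : ℝ)/8) ↔ 1 ≤ w) ∧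
        (∀ w : ℝ, -(n : ℝ) ^ (-(3 : ℝ)/8) ≤ ∑ z, D z * f w z) ∧
        -- (ii) `E_z[g(w;z)]` is a subgradient of `F` at `w`, with variance at most 1
        (∀ w u : ℝ,
          (∑ z, D z * f w z) + (∑ z, D z * g w z) * (u - w) ≤ ∑ z, D z * f u z) ∧
        (∀ w : ℝ, (∑ z, D z * |g w z - ∑ z', D z' * g w z'| ^ 2) ≤ 1) ∧
        -- (iii) lower bound for GD with any small step size `0 < η < 1/(64 n^{5/4})`
        (∀ (η : ℝ), 0 < η → η < 1 / (64 * (n : ℝ) ^ ((5 : ℝ)/4)) → ∀ T : ℕ, 1 ≤ T →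
          (1 - 2 * (n : ℝ) ^ (-(1 : ℝ)/4)) / (4 * (n : ℝ) ^ ((3 : ℝ)/8)) ≤
            (∑ S : Fin n → Fin p, (∏ i, D (S i)) *
                (∑ z, D z * f ((T : ℝ)⁻¹ • ∑ t ∈ Finset.range T, gdIterate g η 0 S t) z))
              - ⨅ w : ℝ, ∑ z, D z * f w z) := by
  refine ⟨64, fun n hn => ?_⟩
  have hx := x9_pos hn
  have hc := (c9_pos hn).le
  have hc1 := c9_le_one hn
  refine ⟨J9 n + 1, D9 n, fun w _ => c9 n * max (-w) (-1), g9 n, ?_⟩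
  have hsumf : ∀ w : ℝ, (∑ z : Fin (J9 n + 1), D9 n z * (c9 n * max (-w) (-1)))
      = c9 n * max (-w) (-1) := by
    intro w
    rw [← Finset.sum_mul, sumD9 hn, one_mul]
  have hFlb : ∀ w : ℝ, -c9 n ≤ c9 n * max (-w) (-1) := by
    intro w
    have := mul_le_mul_of_nonneg_left (le_max_right (-w) (-1)) hc
    linarith
  have hcrw : c9 n = (n : ℝ) ^ (-(3 : ℝ)/8) := rfl
  refine ⟨D9_nonneg hn, sumD9 hn, ?_, ?_, ?_, ?_, ?_, ?_, var9_le hn, ?_⟩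
  · intro w; rw [hsumf w, hcrw]
  · have hFeq : (fun w : ℝ => ∑ z : Fin (J9 n + 1), D9 n z * (c9 n * max (-w) (-1)))
        = fun w : ℝ => c9 n * max (-w) (-1) := funext hsumf
    rw [hFeq]
    have h1 : ConvexOn ℝ Set.univ (fun w : ℝ => -w) :=
      ⟨convex_univ, fun x _ y _ a b _ _ _ => by
        simp only [smul_eq_mul]; exact le_of_eq (by ring)⟩
    have h2 : ConvexOn ℝ Set.univ (fun _ : ℝ => (-1:ℝ)) := convexOn_const _ convex_univ
    have h4 := (h1.sup h2).smul hc
    simpa [Pi.sup_apply, smul_eq_mul] using h4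
  · intro u v
    rw [hsumf u, hsumf v]
    have h1 := abs_max_sub_max_le_abs (-u) (-v) (-1)
    calc |c9 n * max (-u) (-1) - c9 n * max (-v) (-1)|
        = c9 n * |max (-u) (-1) - max (-v) (-1)| := by
          rw [← mul_sub, abs_mul, abs_of_nonneg hc]
      _ ≤ c9 n * |-u - -v| := mul_le_mul_of_nonneg_left h1 hc
      _ = c9 n * |u - v| := by rw [show -u - -v = -(u-v) by ring, abs_neg]
      _ ≤ 1 * |u - v| := mul_le_mul_of_nonneg_right hc1 (abs_nonneg _)
      _ = |u - v| := one_mul _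
  · intro w
    rw [hsumf w, ← hcrw]
    constructor
    · intro h
      have h2 : c9 n * max (-w) (-1) = c9 n * (-1) := by rw [h]; ring
      have h3 := mul_left_cancel₀ (c9_pos hn).ne' h2
      have h4 : -w ≤ -1 := by
        rcases max_cases (-w) (-1) with ⟨h5, h6⟩ | ⟨h5, h6⟩
        · rw [h5] at h3; linarith
        · linarith
      linarith
    · intro h
      rw [max_eq_right (by linarith : -w ≤ -1)]
      ring
  · intro w; rw [hsumf w, ← hcrw]; exact hFlb w
  · intro w u
    rw [hsumf w, hsumf u, G9_eq hn w]
    by_cases h1 : 1 ≤ w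
    · rw [if_pos h1, max_eq_right (by linarith : -w ≤ -1)]
      have := hFlb u
      linarith
    · rw [if_neg h1, max_eq_left (by linarith : (-1:ℝ) ≤ -w)]
      have h2 := mul_le_mul_of_nonneg_left (le_max_left (-u) (-1)) hc
      have h3 : c9 n * -w + -c9 n * (u - w) = c9 n * (-u) := by ring
      linarith
  · -- main GD lower bound
    intro η hη0 hη T hT
    have hInf : (⨅ w : ℝ, c9 n * max (-w) (-1)) = -c9 n := by
      apply le_antisymm
      · have hb : BddBelow (Set.range fun w : ℝ => c9 n * max (-w) (-1)) := by
          refine ⟨-c9 n, ?_⟩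
          rintro y ⟨w, rfl⟩
          exact hFlb w
        calc (⨅ w : ℝ, c9 n * max (-w) (-1)) ≤ c9 n * max (-(1:ℝ)) (-1) := ciInf_le hb 1
          _ = -c9 n := by rw [max_self]; ring
      · exact le_ciInf hFlb
    simp only [hsumf, hInf]
    set S₀ : Fin n → Fin (J9 n + 1) := (fun _ => 0) with hS₀
    set avg : (Fin n → Fin (J9 n + 1)) → ℝ :=
      fun S => (T : ℝ)⁻¹ • ∑ t ∈ Finset.range T, gdIterate (g9 n) η 0 S t with havg
    set P : (Fin n → Fin (J9 n + 1)) → ℝ := fun S => ∏ i, D9 n (S i) with hP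
    have hPnn : ∀ S, 0 ≤ P S := fun S => Finset.prod_nonneg (fun i _ => D9_nonneg hn _)
    have hPsum : ∑ S, P S = 1 := by
      rw [hP, ← Fintype.sum_pow (D9 n) n, sumD9 hn, one_pow]
    have hPS0 : P S₀ = D09 n ^ n := by
      rw [hP, hS₀]
      have : D9 n 0 = D09 n := by simp [D9]
      simp [this]
    -- the trap bound for nontrivial samples
    have hgood : ∀ S : Fin n → Fin (J9 n + 1), S ≠ S₀ →
        -(3/4) * c9 n ≤ c9 n * max (-(avg S)) (-1) := by
      intro S hS
      obtain ⟨i₀, hi₀⟩ := Function.ne_iff.mp hS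
      have hm : (S i₀ : ℕ) ≠ 0 := by
        intro h
        apply hi₀
        apply Fin.ext
        simpa [hS₀] using h
      have hmlt : (S i₀ : ℕ) < J9 n + 1 := (S i₀).isLt
      set k : ℕ := (S i₀ : ℕ) - 1 with hk
      have hkk : (S i₀ : ℕ) = k + 1 := by omega
      have hkJ : k + 1 ≤ J9 n := by omega
      have htrap := trap9 hn η hη0.le (step9 hn η hη0 hη) S k hkJ i₀ hkk
      have h34 : ((k:ℝ)+1)/(n:ℝ) ≤ 3/4 := by
        have h1 : ((k:ℝ)+1) ≤ ((J9 n : ℝ)) := by exact_mod_cast hkJ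
        have h2 := J9_div_le hn
        calc ((k:ℝ)+1)/(n:ℝ) ≤ ((J9 n : ℝ))/(n:ℝ) := by gcongr
          _ ≤ 3/4 := h2
      have hT0 : (0:ℝ) < (T:ℝ) := by exact_mod_cast (by omega : 0 < T)
      have hsum : ∑ t ∈ Finset.range T, gdIterate (g9 n) η 0 S t ≤ (T:ℝ) * (3/4) := by
        have h5 := Finset.sum_le_card_nsmul (Finset.range T)
          (fun t => gdIterate (g9 n) η 0 S t) (3/4)
          (fun t _ => le_of_lt (lt_of_lt_of_le (htrap t) h34))
        rwa [Finset.card_range, nsmul_eq_mul] at h5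
      have havg34 : avg S ≤ 3/4 := by
        rw [havg]
        simp only [smul_eq_mul]
        calc (T:ℝ)⁻¹ * ∑ t ∈ Finset.range T, gdIterate (g9 n) η 0 S t
            ≤ (T:ℝ)⁻¹ * ((T:ℝ) * (3/4)) := by
              apply mul_le_mul_of_nonneg_left hsum (by positivity)
          _ = 3/4 := by field_simp
      have hmax : -(3/4 : ℝ) ≤ max (-(avg S)) (-1) :=
        le_trans (by linarith) (le_max_left (-(avg S)) (-1))
      have := mul_le_mul_of_nonneg_left hmax hc
      linarith
    -- expectation lower bound
    have hkey : (c9 n / 4) * (1 - D09 n ^ n) ≤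
        (∑ S : Fin n → Fin (J9 n + 1), P S * (c9 n * max (-(avg S)) (-1))) + c9 n := by
      have h1 : (∑ S : Fin n → Fin (J9 n + 1), P S * (c9 n * max (-(avg S)) (-1))) + c9 n
          = ∑ S : Fin n → Fin (J9 n + 1), P S * (c9 n * max (-(avg S)) (-1) + c9 n) := by
        simp only [mul_add]
        rw [Finset.sum_add_distrib, ← Finset.sum_mul, hPsum, one_mul]
      rw [h1]
      have h2 : ∑ S ∈ Finset.univ.erase S₀, P S * (c9 n * max (-(avg S)) (-1) + c9 n)
          ≤ ∑ S : Fin n → Fin (J9 n + 1), P S * (c9 n * max (-(avg S)) (-1) + c9 n) := by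
        apply Finset.sum_le_sum_of_subset_of_nonneg (Finset.subset_univ _)
        intro S _ _
        exact mul_nonneg (hPnn S) (by linarith [hFlb (avg S)])
      have h3 : ∀ S ∈ Finset.univ.erase S₀,
          P S * (c9 n / 4) ≤ P S * (c9 n * max (-(avg S)) (-1) + c9 n) := by
        intro S hS
        have hSne : S ≠ S₀ := (Finset.mem_erase.mp hS).1
        have := hgood S hSne
        apply mul_le_mul_of_nonneg_left ?_ (hPnn S)
        linarith
      have h4 : ∑ S ∈ Finset.univ.erase S₀, P S = 1 - D09 n ^ n := by
        rw [Finset.sum_erase_eq_sub (Finset.mem_univ S₀), hPsum, hPS0]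
      calc (c9 n / 4) * (1 - D09 n ^ n)
          = ∑ S ∈ Finset.univ.erase S₀, P S * (c9 n / 4) := by
            rw [← Finset.sum_mul, h4]; ring
        _ ≤ ∑ S ∈ Finset.univ.erase S₀, P S * (c9 n * max (-(avg S)) (-1) + c9 n) :=
            Finset.sum_le_sum h3
        _ ≤ _ := h2
    have hP09 := P09_le hn
    have h5 : (c9 n / 4) * (1 - 2 * (n:ℝ)^(-(1:ℝ)/4)) ≤ (c9 n / 4) * (1 - D09 n ^ n) := by
      apply mul_le_mul_of_nonneg_left (by linarith) (by positivity)
    have h6 : (c9 n / 4) * (1 - 2 * (n:ℝ)^(-(1:ℝ)/4))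
        = (1 - 2 * (n:ℝ)^(-(1:ℝ)/4)) / (4 * (n:ℝ)^((3:ℝ)/8)) := by
      rw [hcrw, show (-(3:ℝ)/8) = -((3:ℝ)/8) by norm_num, Real.rpow_neg hx.le]
      have h38 : (0:ℝ) < (n:ℝ)^((3:ℝ)/8) := Real.rpow_pos_of_pos hx _
      have hinv : ((n:ℝ)^((3:ℝ)/8))⁻¹ * ((n:ℝ)^((3:ℝ)/8)) = 1 := inv_mul_cancel₀ h38.ne'
      rw [eq_div_iff (by positivity : (4:ℝ) * (n:ℝ)^((3:ℝ)/8) ≠ 0)]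
      linear_combination (1 - 2 * (n:ℝ)^(-(1:ℝ)/4)) * hinv
    rw [sub_neg_eq_add]
    linarith
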